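/- Let Û and U be n×k real matrices, Q a k×k orthogonal matrix, and suppose every row of U is nonzero. Let I_+ = {i ∈ [n] : Û_{i*} ≠ 0}, and let Û' be the |I_+|×k matrix whose rows are the rows Û_{i*}/‖Û_{i*}‖₂ for i ∈ I_+, and let U'' be the |I_+|×k matrix whose rows are (UQ)_{i*}/‖(UQ)_{i*}‖₂ for i ∈ I_+. Then ‖Û' − U''‖_{2,1} ≤ 2 ‖Û − U Q‖_F · √(Σ_{i=1}^n ‖U_{i*}‖₂^{-2}), where ‖A‖_{2,1} = Σ_i ‖A_{i*}‖₂. -/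

import Mathlib

/-!
STATEMENT 13: let `Û`, `U` be `n×k` real matrices, `Q` a `k×k` orthogonal matrix, and
suppose every row of `U` is nonzero.  Let `I₊` be the set of indices of nonzero rows
of `Û`, let `Û'` have rows `Û_{i*}/‖Û_{i*}‖₂` for `i ∈ I₊` and `U''` have rows
`(UQ)_{i*}/‖(UQ)_{i*}‖₂` for `i ∈ I₊`.  Then
`‖Û' − U''‖_{2,1} ≤ 2 ‖Û − U Q‖_F √(Σ_{i=1}^n ‖U_{i*}‖₂⁻²)`, where
`‖A‖_{2,1} = Σ_i ‖A_{i*}‖₂`.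
-/

open scoped BigOperators
open Matrix

noncomputable section

attribute [local instance] Classical.propDecidable

/-- Frobenius norm of an `n × k` real matrix. -/
def frob {n k : ℕ} (A : Matrix (Fin n) (Fin k) ℝ) : ℝ :=
  Real.sqrt (∑ i, ∑ j, A i j ^ 2)

/-- Euclidean norm of a row vector. -/
def rowNorm {k : ℕ} (x : Fin k → ℝ) : ℝ := Real.sqrt (∑ j, x j ^ 2)

lemma rowNorm_eq_norm {k : ℕ} (x : Fin k → ℝ) :
    rowNorm x = ‖(WithLp.equiv 2 (Fin k → ℝ)).symm x‖ := by
  rw [EuclideanSpace.norm_eq, rowNorm]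
  congr 1
  refine Finset.sum_congr rfl fun j _ => ?_
  simp [Real.norm_eq_abs, sq_abs]

lemma normalize_sub_normalize_le {E : Type*} [NormedAddCommGroup E] [NormedSpace ℝ E]
    (x y : E) (hx : x ≠ 0) (hy : y ≠ 0) :
    ‖‖x‖⁻¹ • x - ‖y‖⁻¹ • y‖ ≤ 2 * ‖x - y‖ / ‖y‖ := by
  have hxn : (0:ℝ) < ‖x‖ := norm_pos_iff.mpr hx
  have hyn : (0:ℝ) < ‖y‖ := norm_pos_iff.mpr hy
  have key : ‖x‖⁻¹ • x - ‖y‖⁻¹ • y = ‖y‖⁻¹ • (x - y) + (‖x‖⁻¹ - ‖y‖⁻¹) • x := by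
    rw [smul_sub, sub_smul]; abel
  rw [key]
  have h1 : ‖‖y‖⁻¹ • (x - y)‖ = ‖x - y‖ / ‖y‖ := by
    rw [norm_smul, norm_inv, norm_norm, div_eq_inv_mul]
  have h2 : ‖(‖x‖⁻¹ - ‖y‖⁻¹) • x‖ ≤ ‖x - y‖ / ‖y‖ := by
    rw [norm_smul, Real.norm_eq_abs]
    have habs : |‖x‖⁻¹ - ‖y‖⁻¹| = |‖y‖ - ‖x‖| / (‖x‖ * ‖y‖) := by
      rw [inv_sub_inv hxn.ne' hyn.ne', abs_div, abs_of_pos (mul_pos hxn hyn)]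
    rw [habs]
    have hle : |‖y‖ - ‖x‖| ≤ ‖x - y‖ := by
      rw [abs_sub_comm]; exact abs_norm_sub_norm_le x y
    calc |‖y‖ - ‖x‖| / (‖x‖ * ‖y‖) * ‖x‖ = |‖y‖ - ‖x‖| / ‖y‖ := by
          field_simp
      _ ≤ ‖x - y‖ / ‖y‖ := by gcongr
  calc ‖‖y‖⁻¹ • (x - y) + (‖x‖⁻¹ - ‖y‖⁻¹) • x‖
      ≤ ‖‖y‖⁻¹ • (x - y)‖ + ‖(‖x‖⁻¹ - ‖y‖⁻¹) • x‖ := norm_add_le _ _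
    _ ≤ ‖x - y‖ / ‖y‖ + ‖x - y‖ / ‖y‖ := by rw [h1]; exact add_le_add le_rfl h2
    _ = 2 * ‖x - y‖ / ‖y‖ := by ring

/-- the `(2,1)`-distance between the row-normalized nonzero rows of
`Û` and the corresponding row-normalized rows of `U Q` is controlled by the Frobenius
distance and the inverse squared row norms of `U`. -/
theorem normalized_rows_bound (n k : ℕ) (Uh U : Matrix (Fin n) (Fin k) ℝ)
    (Q : Matrix (Fin k) (Fin k) ℝ) (hQ : Qᵀ * Q = 1)
    (hU : ∀ i, ∃ j, U i j ≠ 0) :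
    ∑ i ∈ Finset.univ.filter (fun i => ∃ j, Uh i j ≠ 0),
        rowNorm (fun j => Uh i j / rowNorm (Uh i) - (U * Q) i j / rowNorm ((U * Q) i)) ≤
      2 * frob (Uh - U * Q) * Real.sqrt (∑ i, (∑ j, U i j ^ 2)⁻¹) := by
  set V := U * Q with hV
  -- rows of V have the same sum of squares as rows of U
  have hQQ : Q * Qᵀ = 1 := mul_eq_one_comm.mp hQ
  have hVU : V * Vᵀ = U * Uᵀ := by
    rw [hV, Matrix.transpose_mul, Matrix.mul_assoc, ← Matrix.mul_assoc Q, hQQ,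
      Matrix.one_mul]
  have hrowsq : ∀ i, ∑ j, V i j ^ 2 = ∑ j, U i j ^ 2 := by
    intro i
    have h1 : (V * Vᵀ) i i = ∑ j, V i j ^ 2 := by
      simp [Matrix.mul_apply, Matrix.transpose_apply, sq]
    have h2 : (U * Uᵀ) i i = ∑ j, U i j ^ 2 := by
      simp [Matrix.mul_apply, Matrix.transpose_apply, sq]
    rw [← h1, ← h2, hVU]
  have hUrow : ∀ i, 0 < rowNorm (U i) := by
    intro i
    obtain ⟨j, hj⟩ := hU i
    apply Real.sqrt_pos.mpr
    exact Finset.sum_pos' (fun j _ => sq_nonneg _)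
      ⟨j, Finset.mem_univ j, by positivity⟩
  have hVrow : ∀ i, rowNorm (V i) = rowNorm (U i) := by
    intro i; rw [rowNorm, rowNorm, hrowsq i]
  -- identify with Euclidean space
  set e : (Fin k → ℝ) → EuclideanSpace ℝ (Fin k) := fun x => (WithLp.equiv 2 (Fin k → ℝ)).symm x with he
  have hVne : ∀ i, e (V i) ≠ 0 := by
    intro i h
    have : rowNorm (V i) = 0 := by
      rw [rowNorm_eq_norm]
      change ‖e (V i)‖ = 0
      rw [h, norm_zero]
    rw [hVrow i] at this
    exact (hUrow i).ne' this
  -- pointwise bound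
  have hpoint : ∀ i ∈ Finset.univ.filter (fun i => ∃ j, Uh i j ≠ 0),
      rowNorm (fun j => Uh i j / rowNorm (Uh i) - V i j / rowNorm (V i)) ≤
        2 * rowNorm (fun j => Uh i j - V i j) * (rowNorm (U i))⁻¹ := by
    intro i hi
    obtain ⟨j, hj⟩ : ∃ j, Uh i j ≠ 0 := (Finset.mem_filter.mp hi).2
    have hxne : e (Uh i) ≠ 0 := by
      intro h
      exact hj (by simpa [he] using congrArg (fun v => v j) h)
    have heq : (fun j => Uh i j / rowNorm (Uh i) - V i j / rowNorm (V i)) =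
        (WithLp.equiv 2 (Fin k → ℝ)) (‖e (Uh i)‖⁻¹ • e (Uh i) - ‖e (V i)‖⁻¹ • e (V i)) := by
      funext j
      simp [he, rowNorm_eq_norm, div_eq_inv_mul]
    rw [heq]
    have hrw : rowNorm ((WithLp.equiv 2 (Fin k → ℝ))
        (‖e (Uh i)‖⁻¹ • e (Uh i) - ‖e (V i)‖⁻¹ • e (V i))) =
        ‖‖e (Uh i)‖⁻¹ • e (Uh i) - ‖e (V i)‖⁻¹ • e (V i)‖ := by
      rw [rowNorm_eq_norm]; simp [he]
    rw [hrw]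
    have := normalize_sub_normalize_le (e (Uh i)) (e (V i)) hxne (hVne i)
    have hsub : rowNorm (fun j => Uh i j - V i j) = ‖e (Uh i) - e (V i)‖ := by
      rw [rowNorm_eq_norm]; congr 1
    have hnv : ‖e (V i)‖ = rowNorm (U i) := by
      rw [← hVrow i, rowNorm_eq_norm, he]
    rw [hsub]
    calc ‖‖e (Uh i)‖⁻¹ • e (Uh i) - ‖e (V i)‖⁻¹ • e (V i)‖
        ≤ 2 * ‖e (Uh i) - e (V i)‖ / ‖e (V i)‖ := this
      _ = 2 * ‖e (Uh i) - e (V i)‖ * (rowNorm (U i))⁻¹ := by rw [hnv, div_eq_mul_inv]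
  calc ∑ i ∈ Finset.univ.filter (fun i => ∃ j, Uh i j ≠ 0),
        rowNorm (fun j => Uh i j / rowNorm (Uh i) - V i j / rowNorm (V i))
      ≤ ∑ i ∈ Finset.univ.filter (fun i => ∃ j, Uh i j ≠ 0),
          2 * rowNorm (fun j => Uh i j - V i j) * (rowNorm (U i))⁻¹ :=
        Finset.sum_le_sum hpoint
    _ ≤ ∑ i, 2 * rowNorm (fun j => Uh i j - V i j) * (rowNorm (U i))⁻¹ := by
        apply Finset.sum_le_sum_of_subset_of_nonneg (Finset.filter_subset _ _)
        intro i _ _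
        have := (hUrow i).le
        have := Real.sqrt_nonneg (∑ j, (Uh i j - V i j) ^ 2)
        simp only [rowNorm]
        positivity
    _ = 2 * ∑ i, rowNorm (fun j => Uh i j - V i j) * (rowNorm (U i))⁻¹ := by
        rw [Finset.mul_sum]; refine Finset.sum_congr rfl fun i _ => ?_; ring
    _ ≤ 2 * (Real.sqrt (∑ i, rowNorm (fun j => Uh i j - V i j) ^ 2) *
          Real.sqrt (∑ i, ((rowNorm (U i))⁻¹) ^ 2)) := by
        have := Real.sum_mul_le_sqrt_mul_sqrt Finset.univ
          (fun i => rowNorm (fun j => Uh i j - V i j)) (fun i => (rowNorm (U i))⁻¹)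
        linarith
    _ = 2 * frob (Uh - V) * Real.sqrt (∑ i, (∑ j, U i j ^ 2)⁻¹) := by
        have h1 : ∑ i, rowNorm (fun j => Uh i j - V i j) ^ 2 =
            ∑ i, ∑ j, (Uh - V) i j ^ 2 := by
          refine Finset.sum_congr rfl fun i _ => ?_
          rw [rowNorm, Real.sq_sqrt (Finset.sum_nonneg fun j _ => sq_nonneg _)]
          simp [Matrix.sub_apply]
        have h2 : ∑ i, ((rowNorm (U i))⁻¹) ^ 2 = ∑ i, (∑ j, U i j ^ 2)⁻¹ := by
          refine Finset.sum_congr rfl fun i _ => ?_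
          rw [inv_pow, rowNorm, Real.sq_sqrt (Finset.sum_nonneg fun j _ => sq_nonneg _)]
        rw [h1, h2, frob]
        ring

end
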